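/- Let E = (e_n : n ∈ ℕ) be a Leja sequence for the closed unit disk D with e_0 = 1 and let n ∈ ℕ. Then there exist ρ ∈ ℂ with ρ^{2^n} = −1 and a Leja sequence E' = (e'_k : k ∈ ℕ) for D with e'_0 = 1 such that e_{2^n + k} = ρ · e'_k for all 0 ≤ k ≤ 2^n − 1. -/

import Mathlib

open Finset
open Polynomial

/-- `e` is a Leja sequence for the closed unit disk `D` with `e 0 = 1`: all points lie in `D`
and for every `d ≥ 1` the product `∏_{j<d} |z - e j|` over `z ∈ D` is maximized at `z = e d`. -/
def IsLejaSeq (e : ℕ → ℂ) : Prop :=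
  e 0 = 1 ∧ (∀ n, ‖e n‖ ≤ 1) ∧
    ∀ d : ℕ, 1 ≤ d → ∀ z : ℂ, ‖z‖ ≤ 1 →
      ∏ j ∈ Finset.range d, ‖z - e j‖ ≤
        ∏ j ∈ Finset.range d, ‖e d - e j‖


/-- A `d`-Leja section. -/
def LejaSec (e : ℕ → ℂ) (d : ℕ) : Prop :=
  e 0 = 1 ∧ (∀ j < d, ‖e j‖ ≤ 1) ∧
    ∀ s : ℕ, 0 < s → s < d → ∀ z : ℂ, ‖z‖ ≤ 1 →
      ∏ j ∈ Finset.range s, ‖z - e j‖ ≤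
        ∏ j ∈ Finset.range s, ‖e s - e j‖

lemma LejaSec.mono {e : ℕ → ℂ} {d d' : ℕ} (h : LejaSec e d) (hd : d' ≤ d) : LejaSec e d' :=
  ⟨h.1, fun j hj => h.2.1 j (hj.trans_le hd), fun s hs hsd => h.2.2 s hs (hsd.trans_le hd)⟩

/-- A maximizer over the closed unit disk of `z ↦ ∏_{j ∈ s} |z - c j|`. -/
noncomputable def maxPt (f : ℂ → ℝ) : ℂ :=
  Classical.epsilon fun z => ‖z‖ ≤ 1 ∧ ∀ w : ℂ, ‖w‖ ≤ 1 → f w ≤ f z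

lemma maxPt_spec (c : ℕ → ℂ) (s : Finset ℕ) :
    ‖maxPt fun z => ∏ j ∈ s, ‖z - c j‖‖ ≤ 1 ∧
      ∀ w : ℂ, ‖w‖ ≤ 1 →
        (∏ j ∈ s, ‖w - c j‖) ≤
          ∏ j ∈ s, ‖(maxPt fun z => ∏ j ∈ s, ‖z - c j‖) - c j‖ := by
  have hex : ∃ z : ℂ, ‖z‖ ≤ 1 ∧ ∀ w : ℂ, ‖w‖ ≤ 1 →
      (∏ j ∈ s, ‖w - c j‖) ≤ ∏ j ∈ s, ‖z - c j‖ := by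
    have hcomp : IsCompact (Metric.closedBall (0:ℂ) 1) := isCompact_closedBall _ _
    have hcont : ContinuousOn (fun z : ℂ => ∏ j ∈ s, ‖z - c j‖)
        (Metric.closedBall (0:ℂ) 1) := by
      apply Continuous.continuousOn
      exact continuous_finset_prod _ fun j _ =>
        continuous_norm.comp (continuous_id.sub continuous_const)
    obtain ⟨z, hz, hmax⟩ := hcomp.exists_isMaxOn (by
      exact ⟨0, by simp⟩) hcont
    refine ⟨z, ?_, fun w hw => ?_⟩
    · simpa using Metric.mem_closedBall.mp hz
    · exact hmax (by simpa [Metric.mem_closedBall] using hw)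
  exact Classical.epsilon_spec hex

/-- Extend a Leja section to an infinite Leja sequence by repeatedly picking maximizers. -/
noncomputable def extendSeq (e : ℕ → ℂ) (d : ℕ) : ℕ → ℂ := fun n =>
  if n < d then e n
  else maxPt fun z => ∏ j ∈ (Finset.range n).attach,
    ‖z - extendSeq e d j.1‖
termination_by n => n
decreasing_by exact Finset.mem_range.mp j.2

lemma extendSeq_lt {e : ℕ → ℂ} {d n : ℕ} (h : n < d) : extendSeq e d n = e n := by
  rw [extendSeq, if_pos h]

lemma extendSeq_ge {e : ℕ → ℂ} {d n : ℕ} (h : ¬ n < d) :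
    extendSeq e d n = maxPt fun z => ∏ j ∈ Finset.range n,
      ‖z - extendSeq e d j‖ := by
  rw [extendSeq, if_neg h]
  congr 1
  funext z
  rw [← Finset.prod_attach (Finset.range n) (fun j => ‖z - extendSeq e d j‖)]

lemma extendSeq_leja {e : ℕ → ℂ} {d : ℕ} (hd : 0 < d) (h : LejaSec e d) (m : ℕ) :
    LejaSec (extendSeq e d) m := by
  refine ⟨by rw [extendSeq_lt hd]; exact h.1, fun j _ => ?_, fun s hs _ z hz => ?_⟩
  · by_cases hj : j < d
    · rw [extendSeq_lt hj]; exact h.2.1 j hj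
    · rw [extendSeq_ge hj]; exact (maxPt_spec (extendSeq e d) (Finset.range j)).1
  · by_cases hsd : s < d
    · have hrw : ∀ w : ℂ, ∏ j ∈ Finset.range s, ‖w - extendSeq e d j‖
          = ∏ j ∈ Finset.range s, ‖w - e j‖ := by
        intro w
        refine Finset.prod_congr rfl fun j hj => ?_
        rw [extendSeq_lt ((Finset.mem_range.mp hj).trans hsd)]
      rw [hrw, hrw, extendSeq_lt hsd]
      exact h.2.2 s hs hsd z hz
    · rw [extendSeq_ge hsd]
      exact (maxPt_spec (extendSeq e d) (Finset.range s)).2 z hz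

lemma eq_neg_one_of_abs_le (a : ℂ) (h1 : ‖a‖ ≤ 1) (h2 : 2 ≤ ‖a - 1‖) :
    a = -1 := by
  have e1 : ‖a‖ * ‖a‖ = a.re * a.re + a.im * a.im := by
    rw [← sq ‖a‖, Complex.sq_norm, Complex.normSq_apply]
  have e2 : ‖a - 1‖ * ‖a - 1‖
      = (a.re - 1) * (a.re - 1) + a.im * a.im := by
    rw [← sq ‖a - 1‖, Complex.sq_norm, Complex.normSq_apply]
    simp [Complex.sub_re, Complex.sub_im]
  have hn1 : ‖a‖ * ‖a‖ ≤ 1 := by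
    nlinarith [norm_nonneg a]
  have hn2 : 4 ≤ ‖a - 1‖ * ‖a - 1‖ := by nlinarith
  have hre : a.re = -1 := by nlinarith
  have him : a.im = 0 := by nlinarith
  apply Complex.ext <;> simp [hre, him]

lemma eq_one_of_abs_le (a : ℂ) (h1 : ‖a‖ ≤ 1) (h2 : 2 ≤ ‖a + 1‖) :
    a = 1 := by
  have := eq_neg_one_of_abs_le (-a) (by simpa using h1) (by
    have : -a - 1 = -(a + 1) := by ring
    rw [this, norm_neg]; exact h2)
  linear_combination -this

lemma prod_sub_eq_pow_sub_one {N : ℕ} (hN : 0 < N) {e : ℕ → ℂ}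
    (himg : (Finset.range N).image e = nthRootsFinset N (1:ℂ)) (z : ℂ) :
    ∏ j ∈ Finset.range N, (z - e j) = z ^ N - 1 := by
  have hprim : IsPrimitiveRoot (Complex.exp (2 * Real.pi * Complex.I / N)) N :=
    Complex.isPrimitiveRoot_exp N hN.ne'
  have hinj : Set.InjOn e (Finset.range N) := by
    apply Finset.injOn_of_card_image_eq
    rw [himg, hprim.card_nthRootsFinset, Finset.card_range]
  calc ∏ j ∈ Finset.range N, (z - e j)
      = ∏ ζ ∈ (Finset.range N).image e, (z - ζ) := (Finset.prod_image
        (fun a ha b hb hab => hinj ha hb hab)).symm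
    _ = ∏ ζ ∈ nthRootsFinset N (1:ℂ), (z - ζ) := by rw [himg]
    _ = z ^ N - 1 := by
        have := hprim.pow_sub_pow_eq_prod_sub_mul (x := z) (y := (1:ℂ)) hN
        simpa using this.symm

lemma lejaB (n : ℕ)
    (ihA : ∀ e : ℕ → ℂ, LejaSec e (2^n) →
      (Finset.range (2^n)).image e = nthRootsFinset (2^n) (1:ℂ))
    (e : ℕ → ℂ) (h : LejaSec e (2^(n+1))) :
    (e (2^n)) ^ (2^n) = -1 ∧ LejaSec (fun k => e (2^n + k) / e (2^n)) (2^n) := by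
  set N := 2^n with hNdef
  have hN : 0 < N := Nat.pow_pos (by norm_num)
  have h2N : 2^(n+1) = N + N := by rw [pow_succ]; omega
  have hNN : N < 2^(n+1) := by omega
  have hNc : (N : ℂ) ≠ 0 := Nat.cast_ne_zero.mpr hN.ne'
  have himg := ihA e (h.mono hNN.le)
  have habs : ∀ z : ℂ, ∏ j ∈ Finset.range N, ‖z - e j‖
      = ‖z ^ N - 1‖ := by
    intro z
    rw [← norm_prod, prod_sub_eq_pow_sub_one hN himg z]
  set ρ := e N with hρdef
  have hρmax : ∀ z : ℂ, ‖z‖ ≤ 1 →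
      ‖z ^ N - 1‖ ≤ ‖ρ ^ N - 1‖ := by
    intro z hz
    have := h.2.2 N hN hNN z hz
    rwa [habs, habs] at this
  have hz₀ : ∃ z₀ : ℂ, ‖z₀‖ ≤ 1 ∧ z₀ ^ N = -1 := by
    refine ⟨Complex.exp ((Real.pi / N : ℝ) * Complex.I), ?_, ?_⟩
    · rw [Complex.norm_exp_ofReal_mul_I]
    · rw [← Complex.exp_nat_mul]
      have : (N : ℂ) * ((Real.pi / N : ℝ) * Complex.I) = Real.pi * Complex.I := by
        push_cast
        field_simp
      rw [this, Complex.exp_pi_mul_I]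
  obtain ⟨z₀, hz₀D, hz₀N⟩ := hz₀
  have h2 : 2 ≤ ‖ρ ^ N - 1‖ := by
    have := hρmax z₀ hz₀D
    rw [hz₀N] at this
    norm_num at this
    exact this
  have hρpow : ρ ^ N = -1 := by
    apply eq_neg_one_of_abs_le _ _ h2
    rw [norm_pow]
    exact pow_le_one₀ (norm_nonneg ρ) (h.2.1 N hNN)
  have hρabs : ‖ρ‖ = 1 := by
    have hx : ‖ρ‖ ^ N = 1 := by
      rw [← norm_pow, hρpow]; simp
    rcases lt_trichotomy (‖ρ‖) 1 with hlt | heq | hgt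
    · exfalso
      have := pow_lt_one₀ (norm_nonneg ρ) hlt hN.ne'
      rw [hx] at this; exact lt_irrefl 1 this
    · exact heq
    · exfalso
      have := one_lt_pow₀ hgt hN.ne'
      rw [hx] at this; exact lt_irrefl 1 this
  have hρ0 : ρ ≠ 0 := by
    intro h0
    rw [h0, zero_pow hN.ne'] at hρpow
    exact absurd hρpow.symm (by norm_num)
  have hρmul : ∀ x : ℂ, ρ * (x / ρ) = x := fun x => by
    field_simp
  refine ⟨hρpow, ?_⟩
  have hkey : ∀ k, k ≤ N → LejaSec (fun j => e (N + j) / ρ) k := by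
    intro k
    induction k with
    | zero =>
      intro _
      refine ⟨?_, fun j hj => absurd hj (by omega), fun s hs hs0 => absurd hs0 (by omega)⟩
      show e (N + 0) / ρ = 1
      rw [Nat.add_zero, ← hρdef, div_self hρ0]
    | succ k ih =>
      intro hk1
      have hkN : k < N := by omega
      have hk := ih hkN.le
      refine ⟨hk.1, fun j hj => ?_, fun s hs hsk z hz => ?_⟩
      · show ‖e (N + j) / ρ‖ ≤ 1
        rw [norm_div, hρabs, div_one]
        exact h.2.1 (N + j) (by omega)
      · -- Leja property at step s ≤ k
        rcases Nat.lt_or_ge s k with hslt | hsge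
        · exact hk.2.2 s hs hslt z hz
        · have hsk' : s = k := by omega
          subst hsk'
          have hs0 : 0 < s := hs
          set P : ℂ → ℝ := fun w => ∏ j ∈ Finset.range s, ‖w - e (N + j) / ρ‖
            with hPdef
          show P z ≤ P (e (N + s) / ρ)
          -- extend the s-Leja section to a 2^n-Leja section
          set E := extendSeq (fun j => e (N + j) / ρ) s with hEdef
          have hext := extendSeq_leja hs0 hk
          have himg' := ihA E (hext N)
          set w₀ := E s with hw₀def
          have hw₀1 : w₀ ^ N = 1 := by
            have hmem : w₀ ∈ (Finset.range N).image E :=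
              Finset.mem_image_of_mem E (Finset.mem_range.mpr hkN)
            rw [himg'] at hmem
            exact (mem_nthRootsFinset hN (1:ℂ)).mp hmem
          have hw₀D : ‖w₀‖ ≤ 1 := (hext (s+1)).2.1 s (Nat.lt_succ_self s)
          have hEeq : ∀ w : ℂ, ∏ j ∈ Finset.range s, ‖w - E j‖ = P w := by
            intro w
            refine Finset.prod_congr rfl fun j hj => ?_
            rw [hEdef, extendSeq_lt (Finset.mem_range.mp hj)]
          have hw₀max : ∀ w : ℂ, ‖w‖ ≤ 1 → P w ≤ P w₀ := by
            intro w hw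
            have := (hext (s+1)).2.2 s hs0 (Nat.lt_succ_self s) w hw
            rwa [hEeq, hEeq] at this
          -- main inequality from the Leja property of e at index N + s
          have hsplit : ∀ w : ℂ, ‖w‖ ≤ 1 →
              ‖w ^ N + 1‖ * P w
                ≤ ‖(e (N + s) / ρ) ^ N + 1‖ * P (e (N + s) / ρ) := by
            intro w hw
            have hzd : ‖ρ * w‖ ≤ 1 := by
              rw [norm_mul, hρabs, one_mul]; exact hw
            have H := h.2.2 (N + s) (by omega) (by omega) (ρ * w) hzd
            rw [Finset.prod_range_add, Finset.prod_range_add, habs, habs] at H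
            have key1 : ∀ v : ℂ, ‖(ρ * v) ^ N - 1‖
                = ‖v ^ N + 1‖ := by
              intro v
              have : (ρ * v) ^ N - 1 = -(v ^ N + 1) := by
                rw [mul_pow, hρpow]; ring
              rw [this, norm_neg]
            have key2 : ∀ v : ℂ, ∏ j ∈ Finset.range s, ‖ρ * v - e (N + j)‖
                = P v := by
              intro v
              refine Finset.prod_congr rfl fun j _ => ?_
              have : ρ * v - e (N + j) = ρ * (v - e (N + j) / ρ) := by
                rw [mul_sub, hρmul]
              rw [this, norm_mul, hρabs, one_mul]
            have hNk : e (N + s) = ρ * (e (N + s) / ρ) := (hρmul _).symm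
            rw [key1 w, key2 w] at H
            rw [hNk, key1 (e (N + s) / ρ), key2 (e (N + s) / ρ)] at H
            exact H
          have he'kD : ‖e (N + s) / ρ‖ ≤ 1 := by
            rw [norm_div, hρabs, div_one]
            exact h.2.1 (N + s) (by omega)
          have hPnonneg : 0 ≤ P (e (N + s) / ρ) :=
            Finset.prod_nonneg fun j _ => norm_nonneg _
          have c1 : 2 * P w₀
              ≤ ‖(e (N + s) / ρ) ^ N + 1‖ * P (e (N + s) / ρ) := by
            have h' := hsplit w₀ hw₀D
            rw [hw₀1] at h'
            have h12 : ‖(1:ℂ) + 1‖ = 2 := by norm_num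
            rwa [h12] at h'
          have c2 : ‖(e (N + s) / ρ) ^ N + 1‖ ≤ 2 := by
            have t1 := norm_add_le ((e (N + s) / ρ) ^ N) 1
            have t2 : ‖(e (N + s) / ρ) ^ N‖ ≤ 1 := by
              rw [norm_pow]
              exact pow_le_one₀ (norm_nonneg _) he'kD
            simp only [norm_one] at t1
            linarith
          have c2' : ‖(e (N + s) / ρ) ^ N + 1‖ * P (e (N + s) / ρ)
              ≤ 2 * P (e (N + s) / ρ) :=
            mul_le_mul_of_nonneg_right c2 hPnonneg
          have c3 : P (e (N + s) / ρ) ≤ P w₀ := hw₀max _ he'kD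
          have hfinal : P w₀ ≤ P (e (N + s) / ρ) := by linarith
          exact (hw₀max z hz).trans hfinal
  exact hkey N le_rfl

lemma lejaA : ∀ n : ℕ, ∀ e : ℕ → ℂ, LejaSec e (2^n) →
    (Finset.range (2^n)).image e = nthRootsFinset (2^n) (1:ℂ) := by
  intro n
  induction n with
  | zero =>
    intro e h
    ext ζ
    simp [Finset.mem_image, mem_nthRootsFinset Nat.one_pos (1:ℂ), h.1, eq_comm]
  | succ n ih =>
    intro e h
    obtain ⟨hρpow, hsec⟩ := lejaB n ih e h
    set N := 2^n with hNdef
    have hN : 0 < N := Nat.pow_pos (by norm_num)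
    have h2N : 2^(n+1) = N + N := by rw [pow_succ]; omega
    have hM : 0 < 2^(n+1) := by omega
    set ρ := e N with hρdef
    have hρ0 : ρ ≠ 0 := by
      intro h0
      rw [h0, zero_pow hN.ne'] at hρpow
      exact absurd hρpow.symm (by norm_num)
    have himg1 := ih e (h.mono (by omega))
    have himg2 := ih _ hsec
    ext ζ
    simp only [Finset.mem_image, Finset.mem_range, mem_nthRootsFinset hM (1:ℂ)]
    constructor
    · rintro ⟨j, hj, rfl⟩
      rw [h2N, pow_add]
      rcases Nat.lt_or_ge j N with hjN | hjN
      · have hmem : e j ∈ nthRootsFinset N (1:ℂ) := by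
          rw [← himg1]
          exact Finset.mem_image_of_mem e (Finset.mem_range.mpr hjN)
        have h1 : e j ^ N = 1 := (mem_nthRootsFinset hN (1:ℂ)).mp hmem
        rw [h1, one_mul]
      · obtain ⟨t, rfl⟩ : ∃ t, j = N + t := ⟨j - N, by omega⟩
        have htN : t < N := by omega
        have hmem : e (N + t) / ρ ∈ nthRootsFinset N (1:ℂ) := by
          rw [← himg2]
          exact Finset.mem_image_of_mem _ (Finset.mem_range.mpr htN)
        have h1 : (e (N + t) / ρ) ^ N = 1 := (mem_nthRootsFinset hN (1:ℂ)).mp hmem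
        have h2 : e (N + t) ^ N = -1 := by
          rw [div_pow, div_eq_one_iff_eq (by rw [hρpow]; norm_num)] at h1
          rw [h1, hρpow]
        rw [h2]; ring
    · intro hζ
      rw [h2N, pow_add] at hζ
      have hcases : ζ ^ N = 1 ∨ ζ ^ N = -1 := by
        have hz : (ζ ^ N - 1) * (ζ ^ N + 1) = 0 := by linear_combination hζ
        rcases mul_eq_zero.mp hz with h' | h'
        · left; linear_combination h'
        · right; linear_combination h'
      rcases hcases with h1 | h1
      · have : ζ ∈ nthRootsFinset N (1:ℂ) := (mem_nthRootsFinset hN (1:ℂ)).mpr h1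
        rw [← himg1] at this
        obtain ⟨j, hj, rfl⟩ := Finset.mem_image.mp this
        exact ⟨j, by simp at hj; omega, rfl⟩
      · have hw : (ζ / ρ) ^ N = 1 := by
          rw [div_pow, hρpow, h1]
          norm_num
        have : ζ / ρ ∈ nthRootsFinset N (1:ℂ) := (mem_nthRootsFinset hN (1:ℂ)).mpr hw
        rw [← himg2] at this
        obtain ⟨t, ht, heq⟩ := Finset.mem_image.mp this
        refine ⟨N + t, by simp at ht; omega, ?_⟩
        have : e (N + t) = ζ := by
          field_simp at heq
          exact heq
        exact this

theorem stmt9 (e : ℕ → ℂ) (he : IsLejaSeq e) (n : ℕ) :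
    ∃ ρ : ℂ, ρ ^ (2 ^ n) = -1 ∧
      ∃ e' : ℕ → ℂ, IsLejaSeq e' ∧ ∀ k < 2 ^ n, e (2 ^ n + k) = ρ * e' k := by
  have hsec : ∀ d, LejaSec e d :=
    fun d => ⟨he.1, fun j _ => he.2.1 j, fun s hs _ => he.2.2 s hs⟩
  obtain ⟨hρpow, hsec'⟩ := lejaB n (lejaA n) e (hsec (2^(n+1)))
  have hN : 0 < 2^n := Nat.pow_pos (by norm_num)
  set ρ := e (2^n) with hρdef
  have hρ0 : ρ ≠ 0 := by
    intro h0
    rw [h0, zero_pow hN.ne'] at hρpow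
    exact absurd hρpow.symm (by norm_num)
  refine ⟨ρ, hρpow, extendSeq (fun k => e (2^n + k) / ρ) (2^n), ?_, ?_⟩
  · have hext := extendSeq_leja hN hsec'
    exact ⟨(hext 1).1, fun m => (hext (m+1)).2.1 m (Nat.lt_succ_self m),
      fun d hd z hz => (hext (d+1)).2.2 d hd (Nat.lt_succ_self d) z hz⟩
  · intro k hk
    rw [extendSeq_lt hk]
    field_simp
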